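/- Let (σ_ℓ)_{ℓ≥1} be a GPAS variance sequence with gate parameters (α_ℓ) and scaling factors β_ℓ = 1 − SiLU(α_ℓ) > 0. Then for every ℓ ≥ 1 the variance lower bound holds: log σ_ℓ² ≥ log σ_1² + ∑_{k=1}^{ℓ−1} ( 1/(σ_k + 1) + log β_k ). -/

import Mathlib

/-- The Sigmoid Linear Unit: `SiLU x = x / (1 + exp (−x))`. -/
noncomputable def SiLU (x : ℝ) : ℝ := x / (1 + Real.exp (-x))

/-- For a GPAS variance sequence `σ` (here `σ 0 = σ_1`, `σ k = σ_{k+1}`) with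
gate parameters `α` and scaling factors `β ℓ = 1 − SiLU (α ℓ) > 0` satisfying the recursion
`σ_{ℓ+1}² = σ_ℓ² (1 + 1/σ_ℓ) β_ℓ`, the variance lower bound holds for every layer:
`log σ_ℓ² ≥ log σ_1² + ∑_{k=1}^{ℓ−1} (1/(σ_k + 1) + log β_k)`. -/
theorem gpas_variance_lower_bound
    (σ α : ℕ → ℝ)
    (hσ : ∀ ℓ, 0 < σ ℓ)
    (hβ : ∀ ℓ, 0 < 1 - SiLU (α ℓ))
    (hrec : ∀ ℓ, (σ (ℓ + 1)) ^ 2 = (σ ℓ) ^ 2 * (1 + 1 / σ ℓ) * (1 - SiLU (α ℓ))) :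
    ∀ ℓ : ℕ, Real.log ((σ ℓ) ^ 2) ≥
      Real.log ((σ 0) ^ 2) +
        ∑ k ∈ Finset.range ℓ,
          (1 / (σ k + 1) + Real.log (1 - SiLU (α k))) := by
  intro ℓ
  induction ℓ with
  | zero => simp
  | succ n ih =>
    have hs := hσ n
    have hpos : (0:ℝ) < 1 + 1 / σ n := by positivity
    have hlog : Real.log ((σ (n+1))^2) =
        Real.log ((σ n)^2) + Real.log (1 + 1 / σ n) + Real.log (1 - SiLU (α n)) := by
      rw [hrec n, Real.log_mul (by positivity) (ne_of_gt (hβ n)),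
        Real.log_mul (by positivity) (ne_of_gt hpos)]
    have hkey : 1 / (σ n + 1) ≤ Real.log (1 + 1 / σ n) := by
      have := Real.one_sub_inv_le_log_of_pos hpos
      have heq : 1 - (1 + 1 / σ n)⁻¹ = 1 / (σ n + 1) := by
        field_simp
        ring
      linarith [heq ▸ this]
    rw [Finset.sum_range_succ]
    rw [hlog]
    linarith
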